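/- Let Z = [Z_0, ..., Z_n] be a block row of real m×m matrices with Z_0 symmetric. The infimum over Y ∈ M_{m,n} of λγ·h_∞(Y) − tr(Z Y^T) is 0 if diag(Z_j) = 0 for j = 0,...,n and Σ_{j=0}^n (|(Z_j)_{kh}| + |(Z_j)_{hk}|) ≤ λγ for all k ≠ h, and is −∞ otherwise. -/

import Mathlib

open Matrix Finset
open scoped ComplexOrder

/-- The shift operator Δ(e^{iθ}) = [I_m, e^{iθ}I_m, ..., e^{inθ}I_m]. -/
noncomputable def Delta (m n : ℕ) (θ : ℝ) : Matrix (Fin m) (Fin (n+1) × Fin m) ℂ :=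
  fun i p => Complex.exp (Complex.I * (p.1 : ℕ) * θ) * (if i = p.2 then 1 else 0)

/-- D_0(X) = Σ_h X_{hh} (sum of diagonal blocks). -/
def Dop0 {m n : ℕ} (X : Matrix (Fin (n+1) × Fin m) (Fin (n+1) × Fin m) ℝ) :
    Matrix (Fin m) (Fin m) ℝ :=
  fun a b => ∑ h : Fin (n+1), X (h, a) (h, b)

/-- D_j(X) = 2 Σ_h X_{h, h+j}, for j ≥ 1. -/
def DopJ {m n : ℕ} (X : Matrix (Fin (n+1) × Fin m) (Fin (n+1) × Fin m) ℝ) (j : ℕ) :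
    Matrix (Fin m) (Fin m) ℝ :=
  fun a b => 2 * ∑ h : Fin (n+1), ∑ k : Fin (n+1),
    if (k : ℕ) = (h : ℕ) + j then X (h, a) (k, b) else 0

/-- Symmetric block Toeplitz matrix with first block row Y. -/
def Tobl {m n : ℕ} (Y : Fin (n+1) → Matrix (Fin m) (Fin m) ℝ) :
    Matrix (Fin (n+1) × Fin m) (Fin (n+1) × Fin m) ℝ :=
  fun p q =>
    if (p.1 : ℕ) ≤ (q.1 : ℕ) then
      Y ⟨(q.1 : ℕ) - (p.1 : ℕ), lt_of_le_of_lt (Nat.sub_le _ _) q.1.isLt⟩ p.2 q.2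
    else
      Y ⟨(p.1 : ℕ) - (q.1 : ℕ), lt_of_le_of_lt (Nat.sub_le _ _) p.1.isLt⟩ q.2 p.2

/-- Singular values of a square complex matrix (unsorted): square roots of
the eigenvalues of AᴴA. -/
noncomputable def singularValues {m : ℕ} (A : Matrix (Fin m) (Fin m) ℂ) : Fin m → ℝ :=
  fun i => Real.sqrt ((Matrix.posSemidef_conjTranspose_mul_self A).1.eigenvalues i)

/-- The k-th largest singular value (k = 0 gives the largest). -/
noncomputable def sdesc {m : ℕ} (A : Matrix (Fin m) (Fin m) ℂ) : Fin m → ℝ :=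
  fun i => (singularValues A ∘ Tuple.sort (singularValues A)) i.rev

/-- Largest singular value (operator norm). -/
noncomputable def opNorm {m : ℕ} (A : Matrix (Fin m) (Fin m) ℂ) : ℝ :=
  ⨆ i, singularValues A i

/-- The group-sparsity regularizer `h_∞(Y) = Σ_{k>h} max{ |(Y_0)_{hk}|,
max_j |(Y_j)_{hk}|, max_j |(Y_j)_{kh}| }`, written as a sum of sup-norms of the
vectors collecting the `(k,h)` and `(h,k)` entries of all coefficients. -/
noncomputable def hinf {m n : ℕ} (Y : Fin (n+1) → Matrix (Fin m) (Fin m) ℝ) : ℝ :=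
  ∑ p : {p : Fin m × Fin m // p.2 < p.1},
    ‖(fun jb : Fin (n+1) × Bool =>
        if jb.2 then Y jb.1 p.1.1 p.1.2 else Y jb.1 p.1.2 p.1.1)‖


open Finset in
private lemma pair_sum_aux {m : ℕ} (g : Fin m × Fin m → ℝ) (hd : ∀ i, g (i, i) = 0) :
    ∑ q : Fin m × Fin m, g q
      = ∑ p : {p : Fin m × Fin m // p.2 < p.1}, (g p.1 + g p.1.swap) := by
  classical
  rw [← Finset.sum_filter_add_sum_filter_not Finset.univ (fun q => q.2 < q.1) g]
  have h1 : ∑ p : {p : Fin m × Fin m // p.2 < p.1}, g p.1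
      = ∑ q ∈ Finset.univ.filter (fun q : Fin m × Fin m => q.2 < q.1), g q := by
    refine (Finset.sum_subtype _ ?_ g).symm
    simp
  have h2 : ∑ q ∈ Finset.univ.filter (fun q : Fin m × Fin m => ¬ q.2 < q.1), g q
      = ∑ p : {p : Fin m × Fin m // p.2 < p.1}, g p.1.swap := by
    rw [← Finset.sum_filter_add_sum_filter_not
      (Finset.univ.filter (fun q : Fin m × Fin m => ¬ q.2 < q.1)) (fun q => q.1 < q.2) g]
    have hz : ∑ q ∈ (Finset.univ.filter (fun q : Fin m × Fin m => ¬ q.2 < q.1)).filter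
        (fun q => ¬ q.1 < q.2), g q = 0 := by
      apply Finset.sum_eq_zero
      intro q hq
      simp only [Finset.mem_filter, Finset.mem_univ, true_and, not_lt] at hq
      have h : q.1 = q.2 := le_antisymm hq.1 hq.2
      have h' : q = (q.1, q.1) := by rw [Prod.ext_iff]; exact ⟨rfl, h.symm⟩
      rw [h']; exact hd q.1
    rw [hz, add_zero]
    have hb : ∑ q ∈ (Finset.univ.filter (fun q : Fin m × Fin m => ¬ q.2 < q.1)).filter
        (fun q => q.1 < q.2), g q
        = ∑ q ∈ Finset.univ.filter (fun q : Fin m × Fin m => q.2 < q.1), g q.swap := by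
      apply Finset.sum_nbij' (fun q => Prod.swap q) (fun q => Prod.swap q) <;>
        intro a ha <;>
        simp only [Finset.mem_filter, Finset.mem_univ, true_and, Prod.fst_swap,
          Prod.snd_swap, Prod.swap_swap, not_lt] at ha ⊢ <;>
        first
          | exact ha.2
          | exact ⟨le_of_lt ha, ha⟩
          | rfl
    rw [hb]
    refine (Finset.sum_subtype _ ?_ (fun q => g (Prod.swap q)))
    simp
  rw [← h1, h2, ← Finset.sum_add_distrib]

private lemma mul_sign_self (x : ℝ) : x * Real.sign x = |x| := by
  rcases lt_trichotomy x 0 with h|h|h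
  · rw [Real.sign_of_neg h, abs_of_neg h]; ring
  · simp [h]
  · rw [Real.sign_of_pos h, abs_of_pos h]; ring

private lemma abs_sign_le_one (x : ℝ) : |Real.sign x| ≤ 1 := by
  rcases lt_trichotomy x 0 with h|h|h
  · simp [Real.sign_of_neg h]
  · simp [h]
  · simp [Real.sign_of_pos h]

private lemma trace_expand {m n : ℕ} (Z Y : Fin (n+1) → Matrix (Fin m) (Fin m) ℝ) :
    ∑ j : Fin (n+1), (Z j * (Y j)ᵀ).trace
      = ∑ q : Fin m × Fin m, ∑ j : Fin (n+1), Z j q.1 q.2 * Y j q.1 q.2 := by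
  have h1 : ∑ j : Fin (n+1), (Z j * (Y j)ᵀ).trace
      = ∑ j : Fin (n+1), ∑ a : Fin m, ∑ b : Fin m, Z j a b * Y j a b := by
    simp [Matrix.trace, Matrix.diag, Matrix.mul_apply, Matrix.transpose_apply]
  rw [h1, Finset.sum_comm]
  rw [Fintype.sum_prod_type]
  exact Finset.sum_congr rfl fun a _ => Finset.sum_comm

/-- the infimum over `Y` of `λγ h_∞(Y) − tr(Z Yᵀ)` is `0` when
`diag(Z_j) = 0` for all `j` and `Σ_j (|(Z_j)_{kh}| + |(Z_j)_{hk}|) ≤ λγ` for all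
`k ≠ h`, and `−∞` otherwise. -/
theorem stmt_10 (m n : ℕ) (lam gam : ℝ) (hlam : 0 < lam) (hgam : 0 < gam)
    (Z : Fin (n+1) → Matrix (Fin m) (Fin m) ℝ) (hZ0 : (Z 0).IsSymm) :
    (⨅ Y : {Y : Fin (n+1) → Matrix (Fin m) (Fin m) ℝ // (Y 0).IsSymm},
        ((lam * gam * hinf Y.1 - ∑ j : Fin (n+1), (Z j * (Y.1 j)ᵀ).trace : ℝ) : EReal))
      = if (∀ (j : Fin (n+1)) (i : Fin m), Z j i i = 0)
            ∧ (∀ k h : Fin m, k ≠ h → ∑ j : Fin (n+1), (|Z j k h| + |Z j h k|) ≤ lam * gam)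
        then (0 : EReal) else ⊥ := by
  classical
  by_cases hc : (∀ (j : Fin (n+1)) (i : Fin m), Z j i i = 0)
      ∧ (∀ k h : Fin m, k ≠ h → ∑ j : Fin (n+1), (|Z j k h| + |Z j h k|) ≤ lam * gam)
  · rw [if_pos hc]
    apply le_antisymm
    · -- evaluate at Y = 0
      refine iInf_le_of_le ⟨fun _ => (0 : Matrix (Fin m) (Fin m) ℝ), by
        simp [Matrix.IsSymm]⟩ ?_
      have hh : hinf (fun _ : Fin (n+1) => (0 : Matrix (Fin m) (Fin m) ℝ)) = 0 := by
        unfold hinf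
        apply Finset.sum_eq_zero
        intro p _
        have : (fun jb : Fin (n+1) × Bool =>
            if jb.2 then (0 : Matrix (Fin m) (Fin m) ℝ) p.1.1 p.1.2
            else (0 : Matrix (Fin m) (Fin m) ℝ) p.1.2 p.1.1) = (fun _ => (0:ℝ)) := by
          funext jb; simp
        rw [this]; exact norm_zero
      simp [hh]
    · refine le_iInf fun Y => ?_
      rw [← EReal.coe_zero, EReal.coe_le_coe_iff]
      have key : ∑ j : Fin (n+1), (Z j * (Y.1 j)ᵀ).trace ≤ lam * gam * hinf Y.1 := by
        rw [trace_expand]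
        rw [pair_sum_aux _ (fun i => Finset.sum_eq_zero fun j _ => by
          rw [hc.1 j i, zero_mul])]
        unfold hinf
        rw [Finset.mul_sum]
        apply Finset.sum_le_sum
        intro p _
        set k := p.1.1
        set h := p.1.2
        set v : Fin (n+1) × Bool → ℝ := fun jb =>
          if jb.2 then Y.1 jb.1 p.1.1 p.1.2 else Y.1 jb.1 p.1.2 p.1.1 with hv
        have hvb : ∀ jb, |v jb| ≤ ‖v‖ := fun jb => by
          simpa [Real.norm_eq_abs] using norm_le_pi_norm v jb
        have step : ∑ j : Fin (n+1), Z j k h * Y.1 j k h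
              + ∑ j : Fin (n+1), Z j h k * Y.1 j h k
            ≤ (∑ j : Fin (n+1), (|Z j k h| + |Z j h k|)) * ‖v‖ := by
          rw [Finset.sum_mul, ← Finset.sum_add_distrib]
          apply Finset.sum_le_sum
          intro j _
          have h1 : Z j k h * Y.1 j k h ≤ |Z j k h| * ‖v‖ := by
            calc Z j k h * Y.1 j k h ≤ |Z j k h * Y.1 j k h| := le_abs_self _
            _ = |Z j k h| * |v (j, true)| := by rw [abs_mul]; rfl
            _ ≤ |Z j k h| * ‖v‖ := by
                exact mul_le_mul_of_nonneg_left (hvb _) (abs_nonneg _)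
          have h2 : Z j h k * Y.1 j h k ≤ |Z j h k| * ‖v‖ := by
            calc Z j h k * Y.1 j h k ≤ |Z j h k * Y.1 j h k| := le_abs_self _
            _ = |Z j h k| * |v (j, false)| := by rw [abs_mul]; rfl
            _ ≤ |Z j h k| * ‖v‖ := by
                exact mul_le_mul_of_nonneg_left (hvb _) (abs_nonneg _)
          calc Z j k h * Y.1 j k h + Z j h k * Y.1 j h k
              ≤ |Z j k h| * ‖v‖ + |Z j h k| * ‖v‖ := add_le_add h1 h2
          _ = (|Z j k h| + |Z j h k|) * ‖v‖ := by ring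
        calc (∑ j : Fin (n+1), Z j p.1.1 p.1.2 * Y.1 j p.1.1 p.1.2)
              + (∑ j : Fin (n+1), Z j p.1.swap.1 p.1.swap.2 * Y.1 j p.1.swap.1 p.1.swap.2)
            = ∑ j : Fin (n+1), Z j k h * Y.1 j k h
              + ∑ j : Fin (n+1), Z j h k * Y.1 j h k := rfl
        _ ≤ (∑ j : Fin (n+1), (|Z j k h| + |Z j h k|)) * ‖v‖ := step
        _ ≤ lam * gam * ‖v‖ :=
            mul_le_mul_of_nonneg_right (hc.2 k h (ne_of_gt p.2)) (norm_nonneg v)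
      linarith
  · rw [if_neg hc]
    rw [iInf_eq_bot]
    intro b hb
    obtain ⟨r, hr⟩ : ∃ r : ℝ, (r : EReal) < b := by
      induction b using EReal.rec with
      | bot => exact absurd hb (lt_irrefl _)
      | coe x => exact ⟨x - 1, by exact_mod_cast sub_one_lt x⟩
      | top => exact ⟨0, EReal.coe_lt_top 0⟩
    suffices hsuff : ∃ Y : {Y : Fin (n+1) → Matrix (Fin m) (Fin m) ℝ // (Y 0).IsSymm},
        lam * gam * hinf Y.1 - ∑ j : Fin (n+1), (Z j * (Y.1 j)ᵀ).trace < r by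
      obtain ⟨Y, hY⟩ := hsuff
      exact ⟨Y, lt_trans (by exact_mod_cast hY) hr⟩
    rw [not_and_or] at hc
    rcases hc with hA | hB
    · push_neg at hA
      obtain ⟨j, i, hji⟩ := hA
      set c := Z j i i with hcc
      set t : ℝ := (|r| + 1) / c^2 with ht
      set Yd : Fin (n+1) → Matrix (Fin m) (Fin m) ℝ := fun j' => Matrix.of fun a b =>
        if b = i then if a = i then if j' = j then t * c else 0 else 0 else 0 with hYd
      have hsym : (Yd 0).IsSymm := by
        rw [Matrix.IsSymm]; ext a b
        simp only [hYd, Matrix.transpose_apply, Matrix.of_apply]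
        by_cases hai : a = i <;> by_cases hbi : b = i <;> simp [hai, hbi]
      refine ⟨⟨Yd, hsym⟩, ?_⟩
      have hz : ∀ (j' : Fin (n+1)) (a b : Fin m), a ≠ b → Yd j' a b = 0 := by
        intro j' a b hab
        simp only [hYd, Matrix.of_apply]
        by_cases hbi : b = i <;> by_cases hai : a = i <;> simp_all
      have hh : hinf Yd = 0 := by
        unfold hinf
        apply Finset.sum_eq_zero
        intro p _
        have hne : p.1.2 ≠ p.1.1 := ne_of_lt p.2
        have he : (fun jb : Fin (n+1) × Bool =>
            if jb.2 then Yd jb.1 p.1.1 p.1.2 else Yd jb.1 p.1.2 p.1.1)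
            = fun _ => (0:ℝ) := by
          funext jb
          rcases Bool.eq_false_or_eq_true jb.2 with hb2 | hb2 <;>
            simp [hb2, hz _ _ _ hne, hz _ _ _ hne.symm]
        rw [he]; exact norm_zero
      have htr : ∑ j' : Fin (n+1), (Z j' * (Yd j')ᵀ).trace = |r| + 1 := by
        have h1 : ∀ j' : Fin (n+1), (Z j' * (Yd j')ᵀ).trace
            = ∑ a : Fin m, ∑ b : Fin m, Z j' a b * Yd j' a b := by
          intro j'
          simp [Matrix.trace, Matrix.diag, Matrix.mul_apply, Matrix.transpose_apply]
        simp only [h1]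
        simp only [hYd, Matrix.of_apply, mul_ite, mul_zero, Finset.sum_ite_eq',
          Finset.mem_univ, if_true]
        have hc2 : c^2 ≠ 0 := pow_ne_zero 2 hji
        rw [ht]
        field_simp
        ring
      rw [hh, htr, mul_zero]
      have := abs_nonneg r
      have := neg_abs_le r
      linarith
    · push_neg at hB
      obtain ⟨k0, h0, hne0, hS0⟩ := hB
      obtain ⟨k, h, hlt, hS⟩ : ∃ k h : Fin m, h < k
          ∧ lam * gam < ∑ j : Fin (n+1), (|Z j k h| + |Z j h k|) := by
        rcases lt_or_gt_of_ne hne0 with hkh | hkh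
        · refine ⟨h0, k0, hkh, ?_⟩
          rw [show (∑ j : Fin (n+1), (|Z j h0 k0| + |Z j k0 h0|))
              = ∑ j : Fin (n+1), (|Z j k0 h0| + |Z j h0 k0|) from
            Finset.sum_congr rfl fun _ _ => add_comm _ _]
          exact hS0
        · exact ⟨k0, h0, hkh, hS0⟩
      have hhk : h ≠ k := ne_of_lt hlt
      set S : ℝ := ∑ j : Fin (n+1), (|Z j k h| + |Z j h k|) with hSS
      set t : ℝ := (|r| + 1) / (S - lam * gam) with ht
      have htpos : 0 < t := div_pos (by positivity) (by linarith)
      set Yd : Fin (n+1) → Matrix (Fin m) (Fin m) ℝ := fun j => Matrix.of fun a b =>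
        (if b = h then if a = k then t * Real.sign (Z j k h) else 0 else 0)
        + (if b = k then if a = h then t * Real.sign (Z j h k) else 0 else 0) with hYd
      have hzkh : Z 0 k h = Z 0 h k := (hZ0.apply k h).symm
      have hsym : (Yd 0).IsSymm := by
        rw [Matrix.IsSymm]; ext a b
        simp only [hYd, Matrix.transpose_apply, Matrix.of_apply]
        by_cases hbh : b = h <;> by_cases hak : a = k <;> by_cases hbk : b = k <;>
          by_cases hah : a = h <;> simp_all
      refine ⟨⟨Yd, hsym⟩, ?_⟩
      have hzq : ∀ (j : Fin (n+1)) (a b : Fin m),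
          ¬(a = k ∧ b = h) → ¬(a = h ∧ b = k) → Yd j a b = 0 := by
        intro j a b hc1 hc2
        simp only [hYd, Matrix.of_apply]
        have e1 : (if b = h then if a = k then t * Real.sign (Z j k h) else 0 else 0) = (0:ℝ) := by
          by_cases hbh : b = h
          · rw [if_pos hbh, if_neg (fun hak => hc1 ⟨hak, hbh⟩)]
          · rw [if_neg hbh]
        have e2 : (if b = k then if a = h then t * Real.sign (Z j h k) else 0 else 0) = (0:ℝ) := by
          by_cases hbk : b = k
          · rw [if_pos hbk, if_neg (fun hah => hc2 ⟨hah, hbk⟩)]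
          · rw [if_neg hbk]
        rw [e1, e2, add_zero]
      have hkh_entry : ∀ j : Fin (n+1), Yd j k h = t * Real.sign (Z j k h) := by
        intro j
        simp [hYd, hhk, hhk.symm]
      have hhk_entry : ∀ j : Fin (n+1), Yd j h k = t * Real.sign (Z j h k) := by
        intro j
        simp [hYd, hhk, hhk.symm]
      have hhinf : hinf Yd ≤ t := by
        unfold hinf
        have hval : ∀ p : {p : Fin m × Fin m // p.2 < p.1},
            ‖(fun jb : Fin (n+1) × Bool =>
              if jb.2 then Yd jb.1 p.1.1 p.1.2 else Yd jb.1 p.1.2 p.1.1)‖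
            ≤ if p = (⟨(k, h), hlt⟩ : {p : Fin m × Fin m // p.2 < p.1}) then t else 0 := by
          intro p
          by_cases hp : p = (⟨(k, h), hlt⟩ : {p : Fin m × Fin m // p.2 < p.1})
          · rw [if_pos hp, hp]
            refine (pi_norm_le_iff_of_nonneg htpos.le).mpr ?_
            intro jb
            rw [Real.norm_eq_abs]
            show |if jb.2 = true then Yd jb.1 k h else Yd jb.1 h k| ≤ t
            split_ifs
            · rw [hkh_entry, abs_mul, abs_of_pos htpos]
              calc t * |Real.sign (Z jb.1 k h)| ≤ t * 1 :=
                  mul_le_mul_of_nonneg_left (abs_sign_le_one _) htpos.le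
              _ = t := mul_one t
            · rw [hhk_entry, abs_mul, abs_of_pos htpos]
              calc t * |Real.sign (Z jb.1 h k)| ≤ t * 1 :=
                  mul_le_mul_of_nonneg_left (abs_sign_le_one _) htpos.le
              _ = t := mul_one t
          · rw [if_neg hp]
            have hplt := p.2
            have hz1 : ∀ j : Fin (n+1), Yd j p.1.1 p.1.2 = 0 := by
              intro j
              apply hzq
              · rintro ⟨e1, e2⟩
                exact hp (Subtype.ext (Prod.ext e1 e2))
              · rintro ⟨e1, e2⟩
                rw [e1, e2] at hplt
                exact absurd hplt (not_lt_of_gt hlt)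
            have hz2 : ∀ j : Fin (n+1), Yd j p.1.2 p.1.1 = 0 := by
              intro j
              apply hzq
              · rintro ⟨e1, e2⟩
                rw [e1, e2] at hplt
                exact absurd hplt (not_lt_of_gt hlt)
              · rintro ⟨e1, e2⟩
                exact hp (Subtype.ext (Prod.ext e2 e1))
            have he : (fun jb : Fin (n+1) × Bool =>
                if jb.2 then Yd jb.1 p.1.1 p.1.2 else Yd jb.1 p.1.2 p.1.1)
                = fun _ => (0:ℝ) := by
              funext jb
              rcases Bool.eq_false_or_eq_true jb.2 with hb2 | hb2 <;>
                simp [hb2, hz1, hz2]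
            rw [he]
            exact le_of_eq norm_zero
        calc ∑ p : {p : Fin m × Fin m // p.2 < p.1},
            ‖(fun jb : Fin (n+1) × Bool =>
              if jb.2 then Yd jb.1 p.1.1 p.1.2 else Yd jb.1 p.1.2 p.1.1)‖
            ≤ ∑ p : {p : Fin m × Fin m // p.2 < p.1},
              if p = (⟨(k, h), hlt⟩ : {p : Fin m × Fin m // p.2 < p.1}) then t else 0 :=
            Finset.sum_le_sum fun p _ => hval p
        _ = t := by rw [Finset.sum_ite_eq' Finset.univ _ (fun _ => t)]; simp
      have htr : ∑ j : Fin (n+1), (Z j * (Yd j)ᵀ).trace = t * S := by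
        have h1 : ∀ j : Fin (n+1), (Z j * (Yd j)ᵀ).trace
            = ∑ a : Fin m, ∑ b : Fin m, Z j a b * Yd j a b := by
          intro j
          simp [Matrix.trace, Matrix.diag, Matrix.mul_apply, Matrix.transpose_apply]
        simp only [h1]
        simp only [hYd, Matrix.of_apply, mul_add, Finset.sum_add_distrib, mul_ite,
          mul_zero, Finset.sum_ite_eq', Finset.mem_univ, if_true]
        rw [hSS, Finset.mul_sum, ← Finset.sum_add_distrib]
        refine Finset.sum_congr rfl fun j _ => ?_
        have e1 : Z j k h * (t * Real.sign (Z j k h)) = t * |Z j k h| := by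
          rw [show Z j k h * (t * Real.sign (Z j k h))
            = t * (Z j k h * Real.sign (Z j k h)) by ring, mul_sign_self]
        have e2 : Z j h k * (t * Real.sign (Z j h k)) = t * |Z j h k| := by
          rw [show Z j h k * (t * Real.sign (Z j h k))
            = t * (Z j h k * Real.sign (Z j h k)) by ring, mul_sign_self]
        rw [e1, e2, mul_add]
      rw [htr]
      have hb1 : lam * gam * hinf Yd ≤ lam * gam * t :=
        mul_le_mul_of_nonneg_left hhinf (by positivity)
      have hb2 : t * (S - lam * gam) = |r| + 1 := by
        rw [ht]
        exact div_mul_cancel₀ _ (by linarith)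
      have := neg_abs_le r
      nlinarith [htpos]
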